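/- Let (φ,ξ,η) be an almost paracontact almost paracomplex Riemannian structure on a real inner product space (V,g) of dimension 2n+1, let F be a compatible fundamental tensor, and let Φ be the associated potential tensor. Then for every orthonormal basis e₀, e₁, …, e_{2n} of (V,g), the trace ∑_{i=0}^{2n} Φ(ξ, e_i, e_i) equals 0. -/

import Mathlib

open RealInnerProductSpace

/-- Swap lemma: for a bilinear form `B` and a symmetric operator `T`,
the traces `∑ B(T eᵢ, eᵢ)` and `∑ B(eᵢ, T eᵢ)` agree. -/
lemma sum_swap_bilin {ι : Type*} [Fintype ι] {V : Type*} [NormedAddCommGroup V]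
    [InnerProductSpace ℝ V] (e : OrthonormalBasis ι ℝ V)
    (B : V →ₗ[ℝ] V →ₗ[ℝ] ℝ) (T : V →ₗ[ℝ] V)
    (hT : ∀ x y : V, ⟪T x, y⟫ = ⟪x, T y⟫) :
    ∑ i, B (T (e i)) (e i) = ∑ i, B (e i) (T (e i)) := by
  have h1 : ∀ i, B (T (e i)) (e i) = ∑ j, ⟪e j, T (e i)⟫ * B (e j) (e i) := by
    intro i
    conv_lhs => rw [← e.sum_repr' (T (e i))]
    simp [LinearMap.sum_apply]
  have h2 : ∀ j, B (e j) (T (e j)) = ∑ i, ⟪e i, T (e j)⟫ * B (e j) (e i) := by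
    intro j
    conv_lhs => rw [← e.sum_repr' (T (e j))]
    simp
  calc ∑ i, B (T (e i)) (e i)
      = ∑ i, ∑ j, ⟪e j, T (e i)⟫ * B (e j) (e i) :=
        Finset.sum_congr rfl fun i _ => h1 i
    _ = ∑ j, ∑ i, ⟪e j, T (e i)⟫ * B (e j) (e i) := Finset.sum_comm
    _ = ∑ j, ∑ i, ⟪e i, T (e j)⟫ * B (e j) (e i) := by
        refine Finset.sum_congr rfl fun j _ => Finset.sum_congr rfl fun i _ => ?_
        rw [← hT, real_inner_comm]
    _ = ∑ j, B (e j) (T (e j)) := Finset.sum_congr rfl fun j _ => (h2 j).symm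

/-- For every orthonormal basis `e₀, …, e_{2n}` of `(V,g)` the trace
`∑ᵢ Φ(ξ, eᵢ, eᵢ)` of the potential tensor `Φ` vanishes. -/
theorem potential_tensor_trace_zero
    {n : ℕ} (hn : 0 < n) {V : Type*} [NormedAddCommGroup V]
    [InnerProductSpace ℝ V] [FiniteDimensional ℝ V]
    (hdim : Module.finrank ℝ V = 2 * n + 1)
    (φ : V →ₗ[ℝ] V) (ξ : V) (η : V →ₗ[ℝ] ℝ)
    (hφξ : φ ξ = 0)
    (hφφ : ∀ x : V, φ (φ x) = x - η x • ξ)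
    (hηφ : ∀ x : V, η (φ x) = 0)
    (hηξ : η ξ = 1)
    (htr : LinearMap.trace ℝ V φ = 0)
    (hgφ : ∀ x y : V, ⟪φ x, φ y⟫ = ⟪x, y⟫ - η x * η y)
    (hgξ : ∀ x : V, ⟪x, ξ⟫ = η x)
    (F : V →ₗ[ℝ] V →ₗ[ℝ] V →ₗ[ℝ] ℝ)
    (hFsymm : ∀ x y z : V, F x y z = F x z y)
    (hFcompat : ∀ x y z : V,
      F x y z = -F x (φ y) (φ z) + η y * F x ξ z + η z * F x y ξ)
    (Φ : V → V → V → ℝ)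
    (hΦ : ∀ x y z : V, 2 * Φ x y z =
      F x y (φ z) + F y x (φ z) - F (φ z) x y
      - η x * (F y z ξ - F (φ z) (φ y) ξ)
      - η y * (F x z ξ - F (φ z) (φ x) ξ)
      - η z * (F ξ x y - F x y ξ + F x (φ y) ξ - F ξ ξ (φ x) * η y
               - F y x ξ + F y (φ x) ξ - F ξ ξ (φ y) * η x)) :
    ∀ e : OrthonormalBasis (Fin (2 * n + 1)) ℝ V,
      ∑ i : Fin (2 * n + 1), Φ ξ (e i) (e i) = 0 := by
  intro e
  -- F x ξ ξ = 0
  have hFxξξ : ∀ x : V, F x ξ ξ = 0 := by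
    intro x
    have h := hFcompat x ξ ξ
    rw [hφξ] at h
    simp [hηξ] at h
    linarith
  -- φ is symmetric
  have hφsym : ∀ x y : V, ⟪φ x, y⟫ = ⟪x, φ y⟫ := by
    intro x y
    have h := hgφ (φ x) y
    rw [hφφ, hηφ] at h
    rw [inner_sub_left, real_inner_smul_left] at h
    have hz : (inner ℝ ξ (φ y) : ℝ) = 0 := by
      rw [real_inner_comm, hgξ]; exact hηφ y
    rw [hz] at h
    linarith
  -- F ξ y (φ y) = η y * F ξ ξ (φ y)
  have hFξyφy : ∀ y : V, F ξ y (φ y) = η y * F ξ ξ (φ y) := by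
    intro y
    have h := hFcompat ξ y (φ y)
    rw [hφφ, hηφ] at h
    have hs : F ξ (φ y) (y - η y • ξ) = F ξ y (φ y) - η y * F ξ (φ y) ξ := by
      rw [map_sub, map_smul, smul_eq_mul, hFsymm ξ (φ y) y]
    rw [hs, hFsymm ξ (φ y) ξ] at h
    linarith
  -- pointwise formula
  have hpt : ∀ y : V, 2 * Φ ξ y y =
      η y * F ξ ξ (φ y) + F y (φ y) ξ - F (φ y) y ξ - F y y ξ
      + F (φ y) (φ y) ξ - η y * F ξ ξ y := by
    intro y
    have h := hΦ ξ y y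
    rw [hφξ] at h
    have z1 : F (φ y) (0 : V) ξ = 0 := by simp
    have z2 : F ξ ξ (0 : V) = 0 := by simp
    have z3 : F y (0 : V) ξ = 0 := by simp
    rw [z1, z2, z3, hηξ, hFsymm ξ y ξ, hFsymm ξ (φ y) ξ, hFxξξ y] at h
    rw [hFξyφy y, hFsymm y ξ (φ y), hFsymm (φ y) ξ y] at h
    ring_nf at h ⊢
    linarith
  -- ξ in terms of the basis
  have hξsum : ∑ i, η (e i) • e i = ξ := by
    simp only [← hgξ]
    exact e.sum_repr' ξ
  -- the two η-weighted sums vanish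
  have s1 : ∑ i, η (e i) * F ξ ξ (φ (e i)) = 0 := by
    have : ∑ i, η (e i) * F ξ ξ (φ (e i)) = F ξ ξ (φ (∑ i, η (e i) • e i)) := by
      rw [map_sum, map_sum]
      simp [smul_eq_mul]
    rw [this, hξsum, hφξ]
    simp
  have s2 : ∑ i, η (e i) * F ξ ξ (e i) = 0 := by
    have : ∑ i, η (e i) * F ξ ξ (e i) = F ξ ξ (∑ i, η (e i) • e i) := by
      rw [map_sum]
      simp [smul_eq_mul]
    rw [this, hξsum]
    exact hFxξξ ξ
  -- bilinear forms B x y = F x y ξ and B' x y = F x (φ y) ξ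
  set B : V →ₗ[ℝ] V →ₗ[ℝ] ℝ := LinearMap.mk₂ ℝ (fun x y => F x y ξ)
    (by intros; simp) (by intros; simp [smul_eq_mul]) (by intros; simp)
    (by intros; simp [smul_eq_mul]) with hB
  set B' : V →ₗ[ℝ] V →ₗ[ℝ] ℝ := LinearMap.mk₂ ℝ (fun x y => F x (φ y) ξ)
    (by intros; simp) (by intros; simp [smul_eq_mul]) (by intros; simp)
    (by intros; simp [smul_eq_mul]) with hB'
  have sw : ∑ i, F (φ (e i)) (e i) ξ = ∑ i, F (e i) (φ (e i)) ξ := by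
    have h := sum_swap_bilin e B φ hφsym
    simpa [hB, LinearMap.mk₂_apply] using h
  have s5 : ∑ i, F (φ (e i)) (φ (e i)) ξ = ∑ i, F (e i) (e i) ξ := by
    have h := sum_swap_bilin e B' φ hφsym
    simp only [hB', LinearMap.mk₂_apply] at h
    rw [h]
    refine Finset.sum_congr rfl fun i _ => ?_
    rw [hφφ, map_sub, map_smul]
    simp [smul_eq_mul, hFxξξ]
  -- put everything together
  have key : ∑ i, 2 * Φ ξ (e i) (e i) = 0 := by
    have hrw : ∑ i, 2 * Φ ξ (e i) (e i) =
        ∑ i, (η (e i) * F ξ ξ (φ (e i)) + F (e i) (φ (e i)) ξ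
          - F (φ (e i)) (e i) ξ - F (e i) (e i) ξ
          + F (φ (e i)) (φ (e i)) ξ - η (e i) * F ξ ξ (e i)) :=
      Finset.sum_congr rfl fun i _ => hpt (e i)
    rw [hrw]
    simp only [Finset.sum_add_distrib, Finset.sum_sub_distrib]
    rw [s1, s2, sw, s5]
    ring
  have h2 : (2 : ℝ) * ∑ i, Φ ξ (e i) (e i) = 0 := by
    rw [Finset.mul_sum]
    exact key
  linarith
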